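/- Let Σ₁ be an N×N matrix and Σ₂⁻¹ be given. Define (N+1)×(N+1) matrices Σ₁' = [[Σ₁, v; vᵀ, 1]] where v is the last column of Σ₁ scaled appropriately so that Σ₁' corresponds to adding a leaf with weight w at node N, and Σ₂'⁻¹ the corresponding block matrix with last row/column (0,…,0, −w/(1−w²), 1/(1−w²)) and the (N,N) entry increased by w²/(1−w²). Then det(λI − Σ₁'Σ₂'⁻¹) = (λ−1)·det(λI − Σ₁Σ₂⁻¹). -/

import Mathlib

theorem stmt_12 (N : ℕ) (S1 M : Matrix (Fin (N+1)) (Fin (N+1)) ℝ) (w : ℝ)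
    (hw : w ∈ Set.Ioo (-1:ℝ) 1)
    (hdiag : S1 (Fin.last N) (Fin.last N) = 1) :
    let v : Fin (N+1) → ℝ := fun i => w * S1 i (Fin.last N)
    let S1' : Matrix (Fin (N+1) ⊕ Unit) (Fin (N+1) ⊕ Unit) ℝ :=
      Matrix.fromBlocks S1 (Matrix.of fun i _ => v i) (Matrix.of fun _ j => v j)
        (Matrix.of fun _ _ => 1)
    let M' : Matrix (Fin (N+1) ⊕ Unit) (Fin (N+1) ⊕ Unit) ℝ :=
      Matrix.fromBlocks
        (M + Matrix.single (Fin.last N) (Fin.last N) (w^2/(1-w^2)))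
        (Matrix.of fun i _ => if i = Fin.last N then -w/(1-w^2) else 0)
        (Matrix.of fun _ j => if j = Fin.last N then -w/(1-w^2) else 0)
        (Matrix.of fun _ _ => 1/(1-w^2))
    ∀ lam : ℝ,
      (lam • (1 : Matrix (Fin (N+1) ⊕ Unit) (Fin (N+1) ⊕ Unit) ℝ) - S1' * M').det
        = (lam - 1) * (lam • (1 : Matrix (Fin (N+1)) (Fin (N+1)) ℝ) - S1 * M).det := by
  intro v S1' M' lam
  obtain ⟨h1, h2⟩ := hw
  have hw2 : 1 - w^2 ≠ 0 := by nlinarith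
  have key : lam • (1 : Matrix (Fin (N+1) ⊕ Unit) (Fin (N+1) ⊕ Unit) ℝ) - S1' * M'
      = Matrix.fromBlocks (lam • 1 - S1 * M) 0
          (Matrix.of fun _ j => -((S1' * M') (Sum.inr ()) (Sum.inl j)))
          (Matrix.of fun _ _ => lam - 1) := by
    ext i j
    cases i with
    | inl i =>
      cases j with
      | inl j =>
        simp only [Matrix.sub_apply, Matrix.smul_apply, Matrix.one_apply, Matrix.mul_apply,
          Fintype.sum_sum_type, Matrix.fromBlocks_apply₁₁, Matrix.fromBlocks_apply₁₂,
          Matrix.fromBlocks_apply₂₁, Matrix.fromBlocks_apply₂₂, S1', M', v, Matrix.of_apply,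
          Matrix.add_apply, Matrix.single, mul_add, mul_ite, mul_zero, ite_and,
          Finset.sum_add_distrib, Finset.sum_ite_eq, Finset.sum_ite_eq',
          Finset.mem_univ, if_true, Finset.univ_unique, Finset.sum_singleton]
        by_cases hj : j = Fin.last N
        · simp [hj]
          ring
        · have hj' : ¬ (Fin.last N = j) := fun h => hj h.symm
          simp [hj, hj']
      | inr j =>
        simp only [Matrix.sub_apply, Matrix.smul_apply, Matrix.one_apply, Matrix.mul_apply,
          Fintype.sum_sum_type, Matrix.fromBlocks_apply₁₁, Matrix.fromBlocks_apply₁₂,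
          Matrix.fromBlocks_apply₂₁, Matrix.fromBlocks_apply₂₂, S1', M', v, Matrix.of_apply,
          mul_ite, mul_zero, Finset.sum_ite_eq, Finset.sum_ite_eq',
          Finset.mem_univ, if_true, Finset.univ_unique, Finset.sum_singleton,
          Matrix.zero_apply]
        simp
        ring
    | inr i =>
      cases j with
      | inl j =>
        simp [Matrix.mul_apply, S1', M']
      | inr j =>
        simp only [Matrix.sub_apply, Matrix.smul_apply, Matrix.one_apply, Matrix.mul_apply,
          Fintype.sum_sum_type, Matrix.fromBlocks_apply₁₁, Matrix.fromBlocks_apply₁₂,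
          Matrix.fromBlocks_apply₂₁, Matrix.fromBlocks_apply₂₂, S1', M', v, Matrix.of_apply,
          mul_ite, mul_zero, Finset.sum_ite_eq, Finset.sum_ite_eq',
          Finset.mem_univ, if_true, Finset.univ_unique, Finset.sum_singleton]
        rw [hdiag]
        simp
        field_simp
        ring
  rw [key, Matrix.det_fromBlocks_zero₁₂]
  have : (Matrix.of fun (_ : Unit) (_ : Unit) => lam - 1).det = lam - 1 := by
    rw [Matrix.det_unique]; rfl
  rw [this]; ring
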